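/- Let n ≥ 2. The distance signless Laplacian matrix of the star K_{1,n} (the co-centralizer graph of Q_{4n}) has eigenvalues 2n−3 with multiplicity n−1 and ((5n−3) ± √(9n²−14n+9))/2 each with multiplicity 1; equivalently, its characteristic polynomial is (λ−(2n−3))^{n−1}(λ² − (5n−3)λ + 4n²−4n). -/

import Mathlib

open Polynomial

/-- The star graph `K_{1,n}` on `n+1` vertices. -/
def starGraph (n : ℕ) : SimpleGraph (Fin 1 ⊕ Fin n) :=
  completeBipartiteGraph (Fin 1) (Fin n)

/-- The distance matrix of a graph. -/
noncomputable def distMatrix {V : Type*} [Fintype V] (G : SimpleGraph V) : Matrix V V ℝ :=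
  Matrix.of fun u v => (G.dist u v : ℝ)

/-- The diagonal matrix of transmissions (sums of distances to all other vertices). -/
noncomputable def transMatrix {V : Type*} [Fintype V] [DecidableEq V] (G : SimpleGraph V) :
    Matrix V V ℝ :=
  Matrix.diagonal fun v => ∑ u, (G.dist v u : ℝ)

/-- The distance signless Laplacian matrix `D^Q = Tr + D`. -/
noncomputable def distSignlessLapMatrix {V : Type*} [Fintype V] [DecidableEq V]
    (G : SimpleGraph V) : Matrix V V ℝ :=
  transMatrix G + distMatrix G

lemma star_adj (n : ℕ) (a : Fin 1) (j : Fin n) : (starGraph n).Adj (Sum.inl a) (Sum.inr j) := by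
  simp [starGraph]

lemma dist_ll (n : ℕ) (a b : Fin 1) : (starGraph n).dist (Sum.inl a) (Sum.inl b) = 0 := by
  have : a = b := Subsingleton.elim a b
  simp [this]

lemma dist_cl (n : ℕ) (a : Fin 1) (j : Fin n) :
    (starGraph n).dist (Sum.inl a) (Sum.inr j) = 1 :=
  SimpleGraph.dist_eq_one_iff_adj.2 (star_adj n a j)

lemma dist_lc (n : ℕ) (a : Fin 1) (j : Fin n) :
    (starGraph n).dist (Sum.inr j) (Sum.inl a) = 1 := by
  rw [SimpleGraph.dist_comm]; exact dist_cl n a j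

lemma dist_leaf (n : ℕ) (i j : Fin n) (hij : i ≠ j) :
    (starGraph n).dist (Sum.inr i) (Sum.inr j) = 2 := by
  have h2 : (starGraph n).dist (Sum.inr i) (Sum.inr j) ≤ 2 := by
    simpa using SimpleGraph.dist_le
      (SimpleGraph.Walk.cons ((star_adj n 0 i).symm) ((star_adj n 0 j).toWalk))
  have w : (starGraph n).Walk (Sum.inr i) (Sum.inr j) :=
    .cons ((star_adj n 0 i).symm) (.cons (star_adj n 0 j) .nil)
  have h0 : (starGraph n).dist (Sum.inr i) (Sum.inr j) ≠ 0 :=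
    SimpleGraph.dist_ne_zero_iff_ne_and_reachable.2 ⟨by simp [hij], ⟨w⟩⟩
  have h1 : (starGraph n).dist (Sum.inr i) (Sum.inr j) ≠ 1 := by
    intro h
    exact (by simp [starGraph] : ¬ (starGraph n).Adj (Sum.inr i) (Sum.inr j))
      (SimpleGraph.dist_eq_one_iff_adj.1 h)
  omega

lemma trans_c (n : ℕ) (a : Fin 1) : ∑ u, ((starGraph n).dist (Sum.inl a) u : ℝ) = n := by
  rw [Fintype.sum_sum_type]
  simp [dist_ll, dist_cl]

lemma trans_l (n : ℕ) (i : Fin n) :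
    ∑ u, ((starGraph n).dist (Sum.inr i) u : ℝ) = 2 * n - 1 := by
  rw [Fintype.sum_sum_type]
  have key : ∀ j : Fin n, ((starGraph n).dist (Sum.inr i) (Sum.inr j) : ℝ)
      = 2 - (if i = j then 2 else 0) := by
    intro j; by_cases h : i = j
    · subst h; simp
    · simp [h, dist_leaf n i j h]
  rw [Finset.sum_congr rfl (fun j _ => key j), Finset.sum_sub_distrib, Finset.sum_ite_eq]
  simp [dist_lc]
  ring

lemma M_ll (n : ℕ) (a b : Fin 1) :
    distSignlessLapMatrix (starGraph n) (Sum.inl a) (Sum.inl b) = n := by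
  have : a = b := Subsingleton.elim a b
  subst this
  simp only [distSignlessLapMatrix, transMatrix, distMatrix, Matrix.add_apply,
    Matrix.diagonal_apply_eq, Matrix.of_apply]
  rw [trans_c, dist_ll]
  simp

lemma M_lr (n : ℕ) (a : Fin 1) (j : Fin n) :
    distSignlessLapMatrix (starGraph n) (Sum.inl a) (Sum.inr j) = 1 := by
  simp [distSignlessLapMatrix, transMatrix, distMatrix, Matrix.diagonal_apply_ne, dist_cl]

lemma M_rl (n : ℕ) (a : Fin 1) (j : Fin n) :
    distSignlessLapMatrix (starGraph n) (Sum.inr j) (Sum.inl a) = 1 := by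
  simp [distSignlessLapMatrix, transMatrix, distMatrix, Matrix.diagonal_apply_ne, dist_lc]

lemma M_rr (n : ℕ) (i j : Fin n) :
    distSignlessLapMatrix (starGraph n) (Sum.inr i) (Sum.inr j)
      = if i = j then 2 * (n:ℝ) - 1 else 2 := by
  by_cases h : i = j
  · subst h
    simp only [distSignlessLapMatrix, transMatrix, distMatrix, Matrix.add_apply,
      Matrix.diagonal_apply_eq, Matrix.of_apply, if_pos rfl]
    rw [trans_l]
    simp
  · simp [distSignlessLapMatrix, transMatrix, distMatrix, Matrix.diagonal_apply_ne, h,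
      dist_leaf n i j h, Sum.inr.injEq]

lemma eval_charpoly (n : ℕ) (hn : 2 ≤ n) (x : ℝ) (hx : 2*(n:ℝ) < x) :
    eval x (distSignlessLapMatrix (starGraph n)).charpoly =
      (x - (2*(n:ℝ)-3))^(n-1) * (x^2 - (5*(n:ℝ)-3)*x + (4*(n:ℝ)^2 - 4*n)) := by
  set M := distSignlessLapMatrix (starGraph n) with hM
  have hnR : (2:ℝ) ≤ (n:ℝ) := by exact_mod_cast hn
  set c : ℝ := 2*(n:ℝ)-3 with hc
  have hxn : x - (n:ℝ) ≠ 0 := by nlinarith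
  have hxc : x - c ≠ 0 := by rw [hc]; nlinarith
  set d : Fin 1 ⊕ Fin n → ℝ := Sum.elim (fun _ => x - n) (fun _ => x - c) with hd
  set s : Fin 1 ⊕ Fin n → ℝ := Sum.elim (fun _ => 1) (fun _ => 0) with hs
  set t : Fin 1 ⊕ Fin n → ℝ := Sum.elim (fun _ => 0) (fun _ => 1) with ht
  set U : Matrix (Fin 1 ⊕ Fin n) (Fin 2) ℝ := Matrix.of (fun i k => ![s i, t i] k) with hU
  set Vm : Matrix (Fin 2) (Fin 1 ⊕ Fin n) ℝ :=
    Matrix.of (fun k j => ![t j, s j + 2 * t j] k) with hV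
  have hmap : (Matrix.charmatrix M).map (eval x) = Matrix.diagonal d - U * Vm := by
    ext i j
    have hUV : (U * Vm) i j = s i * t j + t i * (s j + 2 * t j) := by
      simp [Matrix.mul_apply, Fin.sum_univ_two, hU, hV]
    simp only [Matrix.map_apply, Matrix.charmatrix_apply, Matrix.diagonal_apply, Matrix.sub_apply,
      eval_sub, eval_C, apply_ite (eval x), eval_X, eval_zero, hUV]
    rcases i with a | i <;> rcases j with b | j
    · have : a = b := Subsingleton.elim a b
      subst this
      simp [hM, M_ll, hd, hs, ht]
    · simp [hM, M_lr, hs, ht]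
    · simp [hM, M_rl, hs, ht]
    · by_cases h : i = j
      · subst h
        simp only [hM, M_rr, if_pos rfl, if_true, hd, hs, ht, Sum.elim_inr]
        rw [hc]; ring
      · simp [hM, M_rr, h, hs, ht, Sum.inr.injEq]
  have h1 : eval x M.charpoly = (Matrix.diagonal d - U * Vm).det := by
    rw [Matrix.charpoly, ← hmap]
    have := RingHom.map_det (evalRingHom x) (Matrix.charmatrix M)
    simpa [RingHom.mapMatrix_apply, coe_evalRingHom] using this
  have hd0 : ∀ i, d i ≠ 0 := by rintro (a|i) <;> simpa [hd] using by assumption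
  set D' : Matrix (Fin 1 ⊕ Fin n) (Fin 1 ⊕ Fin n) ℝ :=
    Matrix.diagonal (fun i => (d i)⁻¹) with hD'
  have hone : Matrix.diagonal d * D' = 1 := by
    rw [hD', Matrix.diagonal_mul_diagonal]
    have : (fun i => d i * (d i)⁻¹) = fun _ => (1:ℝ) := by
      funext i; exact mul_inv_cancel₀ (hd0 i)
    rw [this, Matrix.diagonal_one]
  have hfac : Matrix.diagonal d - U * Vm = Matrix.diagonal d * (1 - D' * U * Vm) := by
    rw [Matrix.mul_sub, Matrix.mul_one, ← Matrix.mul_assoc, ← Matrix.mul_assoc, hone,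
      Matrix.one_mul]
  set α : ℝ := (x - (n:ℝ))⁻¹ with hα
  set β : ℝ := (x - c)⁻¹ with hβ
  have e00 : (Vm * (D' * U)) 0 0 = 0 := by
    simp [Matrix.mul_apply, hD', Matrix.diagonal_apply, Fintype.sum_sum_type, hU, hV, hs, ht, hd]
  have e01 : (Vm * (D' * U)) 0 1 = (n:ℝ) * β := by
    simp [Matrix.mul_apply, hD', Matrix.diagonal_apply, Fintype.sum_sum_type, hU, hV, hs, ht,
      hd, hβ, Finset.sum_ite_eq, mul_comm]
  have e10 : (Vm * (D' * U)) 1 0 = α := by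
    simp [Matrix.mul_apply, hD', Matrix.diagonal_apply, Fintype.sum_sum_type, hU, hV, hs, ht, hd, hα]
  have e11 : (Vm * (D' * U)) 1 1 = (n:ℝ) * (2 * β) := by
    simp [Matrix.mul_apply, hD', Matrix.diagonal_apply, Fintype.sum_sum_type, hU, hV, hs, ht,
      hd, hβ, Finset.sum_ite_eq, mul_comm]
  have hdet2 : (1 - Vm * (D' * U)).det = (1 - 2*(n:ℝ)*β) - ((n:ℝ)*β) * α := by
    rw [Matrix.det_fin_two]
    simp only [Matrix.sub_apply, Matrix.one_apply_eq, Matrix.one_apply_ne (by decide : (0:Fin 2) ≠ 1),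
      Matrix.one_apply_ne (by decide : (1:Fin 2) ≠ 0), e00, e01, e10, e11]
    ring
  have hdetD : (Matrix.diagonal d).det = (x - (n:ℝ)) * (x - c)^n := by
    rw [Matrix.det_diagonal, Fintype.prod_sum_type]
    simp [hd]
  have key : (x-(n:ℝ)) * (x-c) * ((1 - 2*(n:ℝ)*β) - ((n:ℝ)*β) * α)
      = x^2 - (5*(n:ℝ)-3)*x + (4*(n:ℝ)^2 - 4*n) := by
    have hxc' : x - (2*(n:ℝ)-3) ≠ 0 := by rw [← hc]; exact hxc
    rw [hα, hβ, hc]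
    have hb : (x - (2*(n:ℝ)-3)) * (x - (2*(n:ℝ)-3))⁻¹ = 1 := mul_inv_cancel₀ hxc'
    have ha : (x - (n:ℝ)) * (x - (n:ℝ))⁻¹ = 1 := mul_inv_cancel₀ hxn
    linear_combination (-2*(n:ℝ)*(x-n) - (n:ℝ)*(x-n)*(x - (n:ℝ))⁻¹) * hb + (-(n:ℝ)) * ha
  have hpow : (x - c)^n = (x-c)^(n-1) * (x-c) := by
    rw [← pow_succ]
    congr 1
    omega
  rw [h1, hfac, Matrix.det_mul, Matrix.det_one_sub_mul_comm, hdet2, hdetD, hpow]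
  calc (x - ↑n) * ((x - c) ^ (n - 1) * (x - c)) * (1 - 2 * ↑n * β - ↑n * β * α)
      = ((x-(n:ℝ)) * (x-c) * ((1 - 2*(n:ℝ)*β) - ((n:ℝ)*β) * α)) * (x-c)^(n-1) := by ring
    _ = (x - c) ^ (n - 1) * (x ^ 2 - (5 * ↑n - 3) * x + (4 * ↑n ^ 2 - 4 * ↑n)) := by
        rw [key]; ring

theorem star_distance_signless_laplacian_spectrum (n : ℕ) (hn : 2 ≤ n) :
    (distSignlessLapMatrix (starGraph n)).charpoly =
      (X - C (2 * (n : ℝ) - 3)) ^ (n - 1) *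
        (X ^ 2 - C (5 * (n : ℝ) - 3) * X + C (4 * (n : ℝ) ^ 2 - 4 * n)) ∧
    (distSignlessLapMatrix (starGraph n)).charpoly.rootMultiplicity (2 * (n : ℝ) - 3) = n - 1 ∧
    (distSignlessLapMatrix (starGraph n)).charpoly.rootMultiplicity
      (((5 * (n : ℝ) - 3) + Real.sqrt (9 * (n : ℝ) ^ 2 - 14 * n + 9)) / 2) = 1 ∧
    (distSignlessLapMatrix (starGraph n)).charpoly.rootMultiplicity
      (((5 * (n : ℝ) - 3) - Real.sqrt (9 * (n : ℝ) ^ 2 - 14 * n + 9)) / 2) = 1 := by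
  have hnR : (2:ℝ) ≤ (n:ℝ) := by exact_mod_cast hn
  have hchar : (distSignlessLapMatrix (starGraph n)).charpoly =
      (X - C (2 * (n : ℝ) - 3)) ^ (n - 1) *
        (X ^ 2 - C (5 * (n : ℝ) - 3) * X + C (4 * (n : ℝ) ^ 2 - 4 * n)) := by
    apply Polynomial.eq_of_infinite_eval_eq
    refine (Set.Ioi_infinite (2*(n:ℝ))).mono ?_
    intro x hx
    have hx' : 2*(n:ℝ) < x := hx
    have := eval_charpoly n hn x hx'
    simp only [Set.mem_setOf_eq, this, eval_mul, eval_pow, eval_sub, eval_add, eval_X, eval_C]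
  set Δ : ℝ := 9 * (n : ℝ) ^ 2 - 14 * n + 9 with hΔ
  have hΔpos : 0 < Δ := by rw [hΔ]; nlinarith
  set sq : ℝ := Real.sqrt Δ with hsqdef
  have hsq : sq^2 = Δ := Real.sq_sqrt hΔpos.le
  have hsqpos : 0 < sq := Real.sqrt_pos.2 hΔpos
  set c : ℝ := 2 * (n : ℝ) - 3 with hcdef
  set rp : ℝ := ((5 * (n : ℝ) - 3) + sq) / 2 with hrp
  set rm : ℝ := ((5 * (n : ℝ) - 3) - sq) / 2 with hrm
  have h1 : rp + rm = 5 * (n:ℝ) - 3 := by rw [hrp, hrm]; ring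
  have h2 : rp * rm = 4 * (n:ℝ)^2 - 4 * n := by
    rw [hrp, hrm]
    linear_combination (-(1:ℝ)/4) * hsq
  have hquad : (X:ℝ[X]) ^ 2 - C (5 * (n : ℝ) - 3) * X + C (4 * (n : ℝ) ^ 2 - 4 * n)
      = (X - C rp) * (X - C rm) := by
    have expand : ((X:ℝ[X]) - C rp) * (X - C rm)
        = X ^ 2 - (C rp + C rm) * X + C rp * C rm := by ring
    rw [expand, ← C_add, ← C_mul, h1, h2]
  have hprod : (c - rp) * (c - rm) = (n:ℝ) * (5 - 2 * n) := by
    rw [hcdef, hrp, hrm]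
    linear_combination (-(1:ℝ)/4) * hsq
  have h5 : (5:ℝ) - 2 * n ≠ 0 := by
    intro h
    have h5' : (5:ℝ) = 2 * n := by linarith
    have : (5:ℕ) = 2 * n := by exact_mod_cast h5'
    omega
  have hprodne : (c - rp) * (c - rm) ≠ 0 := by
    rw [hprod]
    exact mul_ne_zero (by positivity) h5
  have hcrp : c ≠ rp := sub_ne_zero.mp (left_ne_zero_of_mul hprodne)
  have hcrm : c ≠ rm := sub_ne_zero.mp (right_ne_zero_of_mul hprodne)
  have hrprm : rp ≠ rm := by
    intro h
    rw [hrp, hrm] at h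
    have : sq = 0 := by linarith
    linarith
  have hXc : ((X:ℝ[X]) - C c) ≠ 0 := X_sub_C_ne_zero c
  have hXp : ((X:ℝ[X]) - C rp) ≠ 0 := X_sub_C_ne_zero rp
  have hXm : ((X:ℝ[X]) - C rm) ≠ 0 := X_sub_C_ne_zero rm
  have hfactored : (distSignlessLapMatrix (starGraph n)).charpoly =
      ((X - C c) ^ (n - 1) * (X - C rp)) * (X - C rm) := by
    rw [hchar, hquad]; ring
  have hne1 : ((X:ℝ[X]) - C c) ^ (n - 1) * (X - C rp) ≠ 0 :=
    mul_ne_zero (pow_ne_zero _ hXc) hXp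
  have hne : ((X:ℝ[X]) - C c) ^ (n - 1) * (X - C rp) * (X - C rm) ≠ 0 :=
    mul_ne_zero hne1 hXm
  refine ⟨hchar, ?_, ?_, ?_⟩
  · rw [hfactored, Polynomial.rootMultiplicity_mul hne, Polynomial.rootMultiplicity_mul hne1,
      Polynomial.rootMultiplicity_X_sub_C_pow,
      Polynomial.rootMultiplicity_eq_zero (by simpa [Polynomial.IsRoot] using sub_ne_zero.2 hcrp),
      Polynomial.rootMultiplicity_eq_zero (by simpa [Polynomial.IsRoot] using sub_ne_zero.2 hcrm)]
    omega
  · rw [hfactored, Polynomial.rootMultiplicity_mul hne, Polynomial.rootMultiplicity_mul hne1,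
      Polynomial.rootMultiplicity_X_sub_C_self,
      Polynomial.rootMultiplicity_eq_zero
        (by simp [Polynomial.IsRoot, sub_ne_zero.2 (Ne.symm hcrp)]),
      Polynomial.rootMultiplicity_eq_zero
        (by simpa [Polynomial.IsRoot] using sub_ne_zero.2 hrprm)]
  · rw [hfactored, Polynomial.rootMultiplicity_mul hne, Polynomial.rootMultiplicity_mul hne1,
      Polynomial.rootMultiplicity_X_sub_C_self,
      Polynomial.rootMultiplicity_eq_zero
        (by simp [Polynomial.IsRoot, sub_ne_zero.2 (Ne.symm hcrm)]),
      Polynomial.rootMultiplicity_eq_zero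
        (by simpa [Polynomial.IsRoot] using sub_ne_zero.2 (Ne.symm hrprm))]
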